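/- Let g : ℝ → ℝ be bounded and measurable, let x ∈ ℝ, let t < s < T be real numbers, let r_i, r_j, α_i, α_j ∈ ℝ and σ_i, σ_j > 0. Define the time-weighted averages r̄ = (r_i(s−t) + r_j(T−s))/(T−t), ᾱ = (α_i(s−t) + α_j(T−s))/(T−t), and σ̄ = √((σ_i²(s−t) + σ_j²(T−s))/(T−t)). Then ∫_ℝ e^{−r_i(s−t)}·V(x·exp((r_i−α_i−σ_i²/2)(s−t) + σ_i√(s−t)·z), r_j, σ_j, T−s, α_j) dγ(z) = V(x, r̄, σ̄, T−t, ᾱ). -/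

import Mathlib

open MeasureTheory ProbabilityTheory
open Real
open scoped NNReal ENNReal

/-- The standard Gaussian measure `N(0,1)` on `ℝ`. -/
noncomputable def stdGaussian : Measure ℝ := gaussianReal 0 1

/-- `V g x r σ t α = ∫ e^{-rt} g(x e^{(r-α-σ²/2)t + σ√t z}) dγ(z)`. -/
noncomputable def V (g : ℝ → ℝ) (x r σ t α : ℝ) : ℝ :=
  ∫ z, Real.exp (-(r * t)) *
      g (x * Real.exp ((r - α - σ ^ 2 / 2) * t + σ * Real.sqrt t * z)) ∂stdGaussian

lemma integral_gaussianReal_eq (m : ℝ) {w : ℝ≥0} (hw : w ≠ 0) (f : ℝ → ℝ) :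
    ∫ u, f u ∂(gaussianReal m w) = ∫ u, gaussianPDFReal m w u * f u := by
  rw [gaussianReal_of_var_ne_zero _ hw, gaussianPDF_def]
  have h1 : (fun x => ENNReal.ofReal (gaussianPDFReal m w x))
      = fun x => ((Real.toNNReal (gaussianPDFReal m w x) : ℝ≥0) : ℝ≥0∞) := rfl
  rw [h1, integral_withDensity_eq_integral_smul
    ((measurable_gaussianPDFReal m w).real_toNNReal) f]
  congr 1 with x
  rw [NNReal.smul_def, Real.coe_toNNReal _ (gaussianPDFReal_nonneg m w x), smul_eq_mul]

lemma conv_pdf (a b : ℝ) (ha : 0 < a) (hb : 0 < b) (u : ℝ) :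
    (∫ z, gaussianPDFReal 0 1 z * gaussianPDFReal (a * z) ⟨b ^ 2, sq_nonneg b⟩ u)
      = gaussianPDFReal 0 ⟨a ^ 2 + b ^ 2, by positivity⟩ u := by
  have hπ := Real.pi_pos
  have hc2 : (0:ℝ) < a ^ 2 + b ^ 2 := by positivity
  have key : ∀ z : ℝ, gaussianPDFReal 0 1 z * gaussianPDFReal (a * z) ⟨b ^ 2, sq_nonneg b⟩ u
      = ((√(2 * π))⁻¹ * (√(2 * π * b ^ 2))⁻¹ * rexp (- u ^ 2 / (2 * (a ^ 2 + b ^ 2))))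
        * rexp (-((a ^ 2 + b ^ 2) / (2 * b ^ 2)) * (z - a * u / (a ^ 2 + b ^ 2)) ^ 2) := by
    intro z
    simp only [gaussianPDFReal, NNReal.coe_mk, NNReal.coe_one, mul_one, sub_zero]
    change (√(2 * π))⁻¹ * rexp (-z ^ 2 / 2) * ((√(2 * π * b ^ 2))⁻¹ * rexp (-(u - a * z) ^ 2 / (2 * b ^ 2))) = _
    rw [mul_mul_mul_comm, ← Real.exp_add, mul_assoc ((√(2 * π))⁻¹ * (√(2 * π * b ^ 2))⁻¹),
      ← Real.exp_add]
    congr 2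
    field_simp
    ring
  simp_rw [key]
  rw [integral_const_mul]
  have hint : (∫ z : ℝ, rexp (-((a ^ 2 + b ^ 2) / (2 * b ^ 2)) * (z - a * u / (a ^ 2 + b ^ 2)) ^ 2))
      = √(π / ((a ^ 2 + b ^ 2) / (2 * b ^ 2))) := by
    calc (∫ z : ℝ, rexp (-((a ^ 2 + b ^ 2) / (2 * b ^ 2)) * (z - a * u / (a ^ 2 + b ^ 2)) ^ 2))
        = ∫ w : ℝ, rexp (-((a ^ 2 + b ^ 2) / (2 * b ^ 2)) * w ^ 2) :=
          integral_sub_right_eq_self (fun w : ℝ => rexp (-((a ^ 2 + b ^ 2) / (2 * b ^ 2)) * w ^ 2)) _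
      _ = √(π / ((a ^ 2 + b ^ 2) / (2 * b ^ 2))) := integral_gaussian _
  rw [hint]
  have hconst : (√(2 * π))⁻¹ * (√(2 * π * b ^ 2))⁻¹ * √(π / ((a ^ 2 + b ^ 2) / (2 * b ^ 2)))
      = (√(2 * π * (a ^ 2 + b ^ 2)))⁻¹ := by
    rw [← Real.sqrt_inv (2 * π), ← Real.sqrt_inv (2 * π * b ^ 2),
      ← Real.sqrt_mul (by positivity : (0:ℝ) ≤ (2 * π)⁻¹),
      ← Real.sqrt_mul (by positivity : (0:ℝ) ≤ (2 * π)⁻¹ * (2 * π * b ^ 2)⁻¹),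
      ← Real.sqrt_inv (2 * π * (a ^ 2 + b ^ 2))]
    congr 1
    field_simp
  calc (√(2 * π))⁻¹ * (√(2 * π * b ^ 2))⁻¹ * rexp (-u ^ 2 / (2 * (a ^ 2 + b ^ 2)))
        * √(π / ((a ^ 2 + b ^ 2) / (2 * b ^ 2)))
      = ((√(2 * π))⁻¹ * (√(2 * π * b ^ 2))⁻¹ * √(π / ((a ^ 2 + b ^ 2) / (2 * b ^ 2))))
        * rexp (-u ^ 2 / (2 * (a ^ 2 + b ^ 2))) := by ring
    _ = gaussianPDFReal 0 ⟨a ^ 2 + b ^ 2, by positivity⟩ u := by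
        rw [hconst]
        unfold gaussianPDFReal
        change _ = (√(2 * π * (a ^ 2 + b ^ 2)))⁻¹ * rexp (-(u - 0) ^ 2 / (2 * (a ^ 2 + b ^ 2)))
        rw [sub_zero]

lemma nnreal_sq_ne_zero {b : ℝ} (hb : 0 < b) : (⟨b ^ 2, sq_nonneg b⟩ : ℝ≥0) ≠ 0 := by
  intro h
  have := congrArg NNReal.toReal h
  change b ^ 2 = 0 at this
  exact (pow_ne_zero 2 hb.ne') this

instance : IsProbabilityMeasure stdGaussian := by
  unfold _root_.stdGaussian; infer_instance

lemma gaussian_double (h : ℝ → ℝ) (hh : Measurable h) {C : ℝ} (hC : ∀ y, |h y| ≤ C)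
    (a b : ℝ) (ha : 0 < a) (hb : 0 < b) :
    ∫ z1, ∫ z2, h (a * z1 + b * z2) ∂stdGaussian ∂stdGaussian
      = ∫ z, h (Real.sqrt (a ^ 2 + b ^ 2) * z) ∂stdGaussian := by
  have hπ := Real.pi_pos
  have hc2 : (0:ℝ) < a ^ 2 + b ^ 2 := by positivity
  have hbv : (⟨b ^ 2, sq_nonneg b⟩ : ℝ≥0) ≠ 0 := nnreal_sq_ne_zero hb
  have hcv : (⟨a ^ 2 + b ^ 2, by positivity⟩ : ℝ≥0) ≠ 0 := by
    intro hco
    have := congrArg NNReal.toReal hco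
    change a ^ 2 + b ^ 2 = 0 at this
    nlinarith
  -- Step 1: the inner integral as a Lebesgue integral against a Gaussian pdf
  have inner_eq : ∀ z1 : ℝ, ∫ z2, h (a * z1 + b * z2) ∂stdGaussian
      = ∫ u, gaussianPDFReal (a * z1) ⟨b ^ 2, sq_nonneg b⟩ u * h u := by
    intro z1
    have hmap : stdGaussian.map (fun z => a * z1 + b * z)
        = gaussianReal (a * z1) ⟨b ^ 2, sq_nonneg b⟩ := by
      have : (fun z : ℝ => a * z1 + b * z) = (fun u => a * z1 + u) ∘ (fun z => b * z) := rfl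
      rw [this, ← Measure.map_map (by fun_prop) (by fun_prop)]
      rw [_root_.stdGaussian, gaussianReal_map_const_mul b, gaussianReal_map_const_add]
      norm_num
      rfl
    calc ∫ z2, h (a * z1 + b * z2) ∂stdGaussian
        = ∫ u, h u ∂(stdGaussian.map (fun z => a * z1 + b * z)) :=
          (integral_map (by fun_prop) hh.aestronglyMeasurable).symm
      _ = ∫ u, h u ∂(gaussianReal (a * z1) ⟨b ^ 2, sq_nonneg b⟩) := by rw [hmap]
      _ = ∫ u, gaussianPDFReal (a * z1) ⟨b ^ 2, sq_nonneg b⟩ u * h u :=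
          integral_gaussianReal_eq _ hbv _
  simp_rw [inner_eq]
  -- Step 2: Fubini swap on stdGaussian.prod volume
  have hGmeas : Measurable (fun p : ℝ × ℝ => gaussianPDFReal (a * p.1) ⟨b ^ 2, sq_nonneg b⟩ p.2) := by
    have : (fun p : ℝ × ℝ => gaussianPDFReal (a * p.1) ⟨b ^ 2, sq_nonneg b⟩ p.2)
        = fun p : ℝ × ℝ => (√(2 * π * ((⟨b ^ 2, sq_nonneg b⟩ : ℝ≥0) : ℝ)))⁻¹
            * rexp (- (p.2 - a * p.1) ^ 2 / (2 * ((⟨b ^ 2, sq_nonneg b⟩ : ℝ≥0) : ℝ))) := rfl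
    rw [this]
    fun_prop
  have hGint : Integrable (fun p : ℝ × ℝ => gaussianPDFReal (a * p.1) ⟨b ^ 2, sq_nonneg b⟩ p.2)
      (stdGaussian.prod volume) := by
    rw [integrable_prod_iff hGmeas.aestronglyMeasurable]
    constructor
    · exact ae_of_all _ fun z1 => integrable_gaussianPDFReal (a * z1) _
    · have : (fun z1 : ℝ => ∫ u, ‖gaussianPDFReal (a * z1) ⟨b ^ 2, sq_nonneg b⟩ u‖)
          = fun _ => (1 : ℝ) := by
        funext z1
        simp_rw [Real.norm_of_nonneg (gaussianPDFReal_nonneg (a * z1) ⟨b ^ 2, sq_nonneg b⟩ _)]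
        exact integral_gaussianPDFReal_eq_one _ hbv
      rw [this]
      exact integrable_const 1
  have hFint' : Integrable
      (fun p : ℝ × ℝ => h p.2 * gaussianPDFReal (a * p.1) ⟨b ^ 2, sq_nonneg b⟩ p.2)
      (stdGaussian.prod volume) := by
    refine hGint.bdd_mul (c := C) ((hh.comp measurable_snd).aestronglyMeasurable)
      (ae_of_all _ fun p => ?_)
    simpa using hC p.2
  have hFint : Integrable
      (fun p : ℝ × ℝ => gaussianPDFReal (a * p.1) ⟨b ^ 2, sq_nonneg b⟩ p.2 * h p.2)
      (stdGaussian.prod volume) :=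
    hFint'.congr (ae_of_all _ fun p => mul_comm _ _)
  have swap := integral_integral_swap
    (f := fun z1 u => gaussianPDFReal (a * z1) ⟨b ^ 2, sq_nonneg b⟩ u * h u)
    (μ := stdGaussian) (ν := volume) hFint
  rw [swap]
  have conv_eq : ∀ u : ℝ, (∫ z1, gaussianPDFReal (a * z1) ⟨b ^ 2, sq_nonneg b⟩ u * h u ∂stdGaussian)
      = gaussianPDFReal 0 ⟨a ^ 2 + b ^ 2, by positivity⟩ u * h u := by
    intro u
    rw [integral_mul_const]
    congr 1
    rw [show _root_.stdGaussian = gaussianReal 0 1 from rfl,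
      integral_gaussianReal_eq 0 one_ne_zero, conv_pdf a b ha hb u]
  simp_rw [conv_eq]
  rw [← integral_gaussianReal_eq 0 hcv]
  have hmap2 : stdGaussian.map (fun z => √(a ^ 2 + b ^ 2) * z)
      = gaussianReal 0 ⟨a ^ 2 + b ^ 2, by positivity⟩ := by
    rw [_root_.stdGaussian, gaussianReal_map_const_mul, mul_zero, mul_one]
    congr 1
    ext
    simp only [NNReal.coe_mk]
    rw [Real.sq_sqrt hc2.le]
    rfl
  rw [← hmap2, integral_map (by fun_prop) hh.aestronglyMeasurable]

/-- One-switching identity: the discounted Gaussian average over `[t,s]` of the regime-`j`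
value `V` at time `s` equals `V` with time-averaged parameters over `[t,T]`. -/
theorem one_switching_identity (g : ℝ → ℝ) (hg : Measurable g) (hbdd : ∃ C, ∀ y, |g y| ≤ C)
    (x t s T ri rj αi αj σi σj : ℝ) (hts : t < s) (hsT : s < T)
    (hσi : 0 < σi) (hσj : 0 < σj) :
    (∫ z, Real.exp (-(ri * (s - t))) *
        V g (x * Real.exp ((ri - αi - σi ^ 2 / 2) * (s - t) + σi * Real.sqrt (s - t) * z))
          rj σj (T - s) αj ∂stdGaussian)
    = V g x ((ri * (s - t) + rj * (T - s)) / (T - t))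
        (Real.sqrt ((σi ^ 2 * (s - t) + σj ^ 2 * (T - s)) / (T - t)))
        (T - t)
        ((αi * (s - t) + αj * (T - s)) / (T - t)) := by
  obtain ⟨C, hC⟩ := hbdd
  have hst : 0 < s - t := sub_pos.mpr hts
  have hTs : 0 < T - s := sub_pos.mpr hsT
  have htT : 0 < T - t := by linarith
  set a := σi * Real.sqrt (s - t) with ha_def
  set b := σj * Real.sqrt (T - s) with hb_def
  have ha : 0 < a := mul_pos hσi (Real.sqrt_pos.mpr hst)
  have hb : 0 < b := mul_pos hσj (Real.sqrt_pos.mpr hTs)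
  have ha2 : a ^ 2 = σi ^ 2 * (s - t) := by rw [ha_def, mul_pow, Real.sq_sqrt hst.le]
  have hb2 : b ^ 2 = σj ^ 2 * (T - s) := by rw [hb_def, mul_pow, Real.sq_sqrt hTs.le]
  set A : ℝ := (ri - αi - σi ^ 2 / 2) * (s - t) + (rj - αj - σj ^ 2 / 2) * (T - s) with hA_def
  set h : ℝ → ℝ := fun u => g (x * Real.exp (A + u)) with hh_def
  have hhm : Measurable h :=
    hg.comp (measurable_const.mul ((measurable_const.add measurable_id).exp))
  have hhb : ∀ y, |h y| ≤ C := fun y => hC _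
  have hfold : ∀ u : ℝ, g (x * Real.exp (A + u)) = h u := fun _ => rfl
  unfold V
  have hg_arg : ∀ z1 z2 : ℝ,
      (x * Real.exp ((ri - αi - σi ^ 2 / 2) * (s - t) + a * z1))
        * Real.exp ((rj - αj - σj ^ 2 / 2) * (T - s) + b * z2)
      = x * Real.exp (A + (a * z1 + b * z2)) := by
    intro z1 z2
    rw [mul_assoc, ← Real.exp_add, hA_def]
    ring_nf
  simp_rw [← hb_def, hg_arg, hfold, integral_const_mul, ← mul_assoc, ← Real.exp_add]
  rw [gaussian_double h hhm hhb a b ha hb]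
  have hsig : Real.sqrt ((σi ^ 2 * (s - t) + σj ^ 2 * (T - s)) / (T - t)) * Real.sqrt (T - t)
      = Real.sqrt (a ^ 2 + b ^ 2) := by
    rw [← Real.sqrt_mul (by positivity), div_mul_cancel₀ _ htT.ne', ha2, hb2]
  have hsig2 : (Real.sqrt ((σi ^ 2 * (s - t) + σj ^ 2 * (T - s)) / (T - t))) ^ 2
      = (σi ^ 2 * (s - t) + σj ^ 2 * (T - s)) / (T - t) := Real.sq_sqrt (by positivity)
  congr 1
  · congr 1
    field_simp
    ring
  · congr 1
    funext z
    rw [← hfold]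
    congr 2
    rw [hsig2, hsig, hA_def]
    field_simp
    ring
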